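/- Let L ≥ 1 be an integer and τ ∈ (0,1] a real number. Let P_1, …, P_L be i.i.d. random variables uniformly distributed on [0,1] (i.e., consider Lebesgue measure on [0,1]^L), and define the truncated product W = ∏_{k : P_k ≤ τ} P_k (an empty product equals 1). Then for every w with 0 < w ≤ 1, ℙ(W < w) = Σ_{k=1}^{L} C(L,k)·(1 − τ)^{L−k} · ( 1{w ≤ τ^k} · w · Σ_{s=0}^{k−1} (k·ln τ − ln w)^s / s! + 1{w > τ^k} · τ^k ), where C(L,k) is the binomial coefficient. -/

import Mathlib

open MeasureTheory Set
open scoped ENNReal Pointwise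

noncomputable def Fz (k : ℕ) (u : ℝ) : ℝ :=
  u * ∑ s ∈ Finset.range k, (-Real.log u) ^ s / (Nat.factorial s : ℝ)

def Cube (k : ℕ) : Set (Fin k → ℝ) := {x | ∀ i, x i ∈ Set.Icc (0:ℝ) 1}

def Ez (k : ℕ) (u : ℝ) : Set (Fin k → ℝ) := {x | x ∈ Cube k ∧ ∏ i, x i < u}

lemma cube_eq (k : ℕ) : Cube k = Set.univ.pi fun _ => Set.Icc (0:ℝ) 1 := by
  ext x; simp only [Cube, Set.mem_pi, Set.mem_setOf_eq, Set.mem_univ, forall_true_left, true_implies]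

lemma cube_measurableSet (k : ℕ) : MeasurableSet (Cube k) := by
  rw [cube_eq]
  exact MeasurableSet.univ_pi fun i => measurableSet_Icc

lemma cube_vol (k : ℕ) : volume (Cube k) = 1 := by
  rw [cube_eq, volume_pi_pi]
  simp [Real.volume_Icc]

lemma Ez_measurableSet (k : ℕ) (u : ℝ) : MeasurableSet (Ez k u) := by
  have : Ez k u = Cube k ∩ {x | ∏ i, x i < u} := rfl
  rw [this]
  exact (cube_measurableSet k).inter
    (measurableSet_lt (Finset.measurable_prod _ fun i _ => measurable_pi_apply i)
      measurable_const)

lemma prod_mem_cube {k : ℕ} {x : Fin k → ℝ} (hx : x ∈ Cube k) :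
    (0:ℝ) ≤ ∏ i, x i ∧ ∏ i, x i ≤ 1 :=
  ⟨Finset.prod_nonneg fun i _ => (hx i).1,
   Finset.prod_le_one (fun i _ => (hx i).1) (fun i _ => (hx i).2)⟩

lemma Ez_full (k : ℕ) {u : ℝ} (hu : 1 < u) : Ez k u = Cube k := by
  ext x
  simp only [Ez, Set.mem_setOf_eq, and_iff_left_iff_imp]
  exact fun hx => lt_of_le_of_lt (prod_mem_cube hx).2 hu

lemma Fz_nonneg {k : ℕ} {u : ℝ} (hu0 : 0 < u) (hu1 : u ≤ 1) : 0 ≤ Fz k u := by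
  apply mul_nonneg hu0.le
  apply Finset.sum_nonneg
  intro s _
  apply div_nonneg _ (Nat.cast_nonneg _)
  exact pow_nonneg (neg_nonneg.2 (Real.log_nonpos hu0.le hu1)) s

lemma Fz_contOn {k : ℕ} {u : ℝ} (hu0 : 0 < u) :
    ContinuousOn (fun a => Fz k (u / a)) {a : ℝ | 0 < a} := by
  have hne : ∀ a ∈ {a : ℝ | 0 < a}, a ≠ 0 := fun a ha => ne_of_gt ha
  have hdiv : ContinuousOn (fun a : ℝ => u / a) {a : ℝ | 0 < a} :=
    continuousOn_const.div continuousOn_id hne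
  have hlog : ContinuousOn (fun a : ℝ => Real.log (u / a)) {a : ℝ | 0 < a} := by
    apply Real.continuousOn_log.comp hdiv
    intro a ha
    exact ne_of_gt (div_pos hu0 ha)
  unfold Fz
  apply hdiv.mul
  apply continuousOn_finset_sum
  intro s _
  exact (hlog.neg.pow s).div_const _

lemma Ez_vol : ∀ (k : ℕ) {u : ℝ}, 0 < u → u ≤ 1 →
    volume (Ez k u) = ENNReal.ofReal (Fz k u) := by
  intro k
  induction k with
  | zero =>
    intro u hu0 hu1
    have : Ez 0 u = ∅ := by
      ext x
      simp [Ez, Cube, not_lt.2 hu1]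
    simp [this, Fz]
  | succ k ih =>
    intro u hu0 hu1
    classical
    set T : Set (ℝ × (Fin k → ℝ)) :=
      {p | p.1 ∈ Set.Icc (0:ℝ) 1 ∧ p.2 ∈ Cube k ∧ p.1 * ∏ i, p.2 i < u} with hTdef
    have hTm : MeasurableSet T := by
      apply MeasurableSet.inter (measurable_fst measurableSet_Icc)
      apply MeasurableSet.inter (measurable_snd (cube_measurableSet k))
      exact measurableSet_lt
        (measurable_fst.mul ((Finset.measurable_prod _ fun i _ =>
          measurable_pi_apply i).comp measurable_snd)) measurable_const
    have h1 : volume (Ez (k+1) u) = (volume.prod volume) T := by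
      have hmp := MeasureTheory.volume_preserving_piFinSuccAbove
        (fun _ : Fin (k+1) => ℝ) 0
      have hpre : (MeasurableEquiv.piFinSuccAbove (fun _ : Fin (k+1) => ℝ) 0) ⁻¹' T
          = Ez (k+1) u := by
        ext x
        simp only [hTdef, MeasurableEquiv.piFinSuccAbove, MeasurableEquiv.coe_mk,
          Equiv.symm_symm, Fin.insertNthEquiv, Equiv.coe_fn_symm_mk, Set.mem_preimage,
          Set.mem_setOf_eq, Ez, Cube, Fin.succAbove_zero]
        constructor
        · rintro ⟨h0, hc, hp⟩
          refine ⟨?_, ?_⟩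
          · intro i
            rcases Fin.eq_zero_or_eq_succ i with rfl | ⟨j, rfl⟩
            · exact h0
            · exact hc j
          · rwa [Fin.prod_univ_succ]
        · rintro ⟨hc, hp⟩
          refine ⟨hc 0, fun j => hc j.succ, ?_⟩
          rwa [Fin.prod_univ_succ] at hp
      rw [← hpre, hmp.measure_preimage hTm.nullMeasurableSet,
        MeasureTheory.Measure.volume_eq_prod]
    have h2 : (volume.prod volume) T
        = ∫⁻ a in Set.Icc (0:ℝ) 1,
            volume {y : Fin k → ℝ | y ∈ Cube k ∧ a * ∏ i, y i < u} := by
      rw [Measure.prod_apply hTm, ← lintegral_indicator measurableSet_Icc]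
      refine lintegral_congr fun a => ?_
      by_cases ha : a ∈ Set.Icc (0:ℝ) 1
      · rw [Set.indicator_of_mem ha]
        congr 1
        ext y
        simp only [hTdef, Set.mem_preimage, Set.mem_setOf_eq]
        exact ⟨fun h => ⟨h.2.1, h.2.2⟩, fun h => ⟨ha, h.1, h.2⟩⟩
      · rw [Set.indicator_of_notMem ha]
        have : Prod.mk a ⁻¹' T = ∅ := by
          ext y
          simp only [hTdef, Set.mem_preimage, Set.mem_setOf_eq,
            Set.mem_empty_iff_false, iff_false]
          intro h
          exact ha h.1
        simp [this]
    have h3 : ∫⁻ a in Set.Icc (0:ℝ) 1,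
          volume {y : Fin k → ℝ | y ∈ Cube k ∧ a * ∏ i, y i < u}
        = (∫⁻ a in Set.Ioc (0:ℝ) u,
            volume {y : Fin k → ℝ | y ∈ Cube k ∧ a * ∏ i, y i < u})
          + ∫⁻ a in Set.Ioc u 1,
            volume {y : Fin k → ℝ | y ∈ Cube k ∧ a * ∏ i, y i < u} := by
      have e1 := setLIntegral_congr
        (f := fun a => volume {y : Fin k → ℝ | y ∈ Cube k ∧ a * ∏ i, y i < u})
        (μ := volume) (MeasureTheory.Ioc_ae_eq_Icc (a := (0:ℝ)) (b := 1))
      rw [← e1, ← Set.Ioc_union_Ioc_eq_Ioc hu0.le hu1,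
        lintegral_union measurableSet_Ioc (Set.Ioc_disjoint_Ioc_of_le le_rfl)]
    have hA : ∫⁻ a in Set.Ioc (0:ℝ) u,
          volume {y : Fin k → ℝ | y ∈ Cube k ∧ a * ∏ i, y i < u}
        = ENNReal.ofReal u := by
      have e1 := setLIntegral_congr
        (f := fun a => volume {y : Fin k → ℝ | y ∈ Cube k ∧ a * ∏ i, y i < u})
        (μ := volume) (MeasureTheory.Ioo_ae_eq_Ioc (a := (0:ℝ)) (b := u))
      rw [← e1]
      have e2 : ∀ a ∈ Set.Ioo (0:ℝ) u,
          volume {y : Fin k → ℝ | y ∈ Cube k ∧ a * ∏ i, y i < u}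
            = (fun _ : ℝ => (1:ℝ≥0∞)) a := by
        intro a ha
        have hset : {y : Fin k → ℝ | y ∈ Cube k ∧ a * ∏ i, y i < u} = Cube k := by
          ext y
          simp only [Set.mem_setOf_eq, and_iff_left_iff_imp]
          intro hy
          exact lt_of_le_of_lt
            (mul_le_of_le_one_right ha.1.le (prod_mem_cube hy).2) ha.2
        simp only [hset, cube_vol]
      rw [setLIntegral_congr_fun measurableSet_Ioo e2,
        setLIntegral_const, one_mul, Real.volume_Ioo, sub_zero]
    have hB : ∫⁻ a in Set.Ioc u 1,
          volume {y : Fin k → ℝ | y ∈ Cube k ∧ a * ∏ i, y i < u}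
        = ∫⁻ a in Set.Ioc u 1, ENNReal.ofReal (Fz k (u / a)) := by
      apply setLIntegral_congr_fun measurableSet_Ioc
      refine (fun a (ha : a ∈ Set.Ioc u 1) => ?_)
      have ha0 : 0 < a := lt_trans hu0 ha.1
      have hset : {y : Fin k → ℝ | y ∈ Cube k ∧ a * ∏ i, y i < u} = Ez k (u / a) := by
        ext y
        simp only [Set.mem_setOf_eq, Ez]
        constructor
        · rintro ⟨hy, hp⟩
          exact ⟨hy, (lt_div_iff₀ ha0).2 (by linarith [mul_comm a (∏ i, y i)])⟩
        · rintro ⟨hy, hp⟩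
          refine ⟨hy, ?_⟩
          have := (lt_div_iff₀ ha0).1 hp
          linarith [mul_comm a (∏ i, y i)]
      simp only [hset]
      exact ih (div_pos hu0 ha0) ((div_le_one ha0).2 ha.1.le)
    have hcont : ContinuousOn (fun a => Fz k (u / a)) (Set.Icc u 1) :=
      (Fz_contOn hu0).mono (fun a ha => lt_of_lt_of_le hu0 ha.1)
    have hBint : IntegrableOn (fun a => Fz k (u / a)) (Set.Ioc u 1) volume :=
      (hcont.integrableOn_Icc).mono_set Set.Ioc_subset_Icc_self
    have hBnn : 0 ≤ᵐ[volume.restrict (Set.Ioc u 1)] fun a => Fz k (u / a) := by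
      refine (ae_restrict_iff' measurableSet_Ioc).2 (ae_of_all _ fun a ha => ?_)
      have ha0 : 0 < a := lt_trans hu0 ha.1
      exact Fz_nonneg (div_pos hu0 ha0) ((div_le_one ha0).2 ha.1.le)
    have hB2 : ∫⁻ a in Set.Ioc u 1, ENNReal.ofReal (Fz k (u / a))
        = ENNReal.ofReal (∫ a in Set.Ioc u 1, Fz k (u / a)) :=
      (MeasureTheory.ofReal_integral_eq_lintegral_ofReal hBint hBnn).symm
    -- FTC part
    set G : ℝ → ℝ := fun a => u * ∑ s ∈ Finset.range k,
      (Real.log a - Real.log u) ^ (s+1) / (Nat.factorial (s+1) : ℝ) with hGdef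
    have hderiv : ∀ a ∈ Set.uIcc u 1, HasDerivAt G (Fz k (u / a)) a := by
      intro a ha
      rw [Set.uIcc_of_le hu1] at ha
      have ha0 : 0 < a := lt_of_lt_of_le hu0 ha.1
      have hlog : HasDerivAt (fun a => Real.log a - Real.log u) a⁻¹ a :=
        (Real.hasDerivAt_log (ne_of_gt ha0)).sub_const _
      have hterm : ∀ s : ℕ, HasDerivAt
          (fun a => (Real.log a - Real.log u) ^ (s+1) / (Nat.factorial (s+1) : ℝ))
          (((s+1 : ℕ) * (Real.log a - Real.log u) ^ s * a⁻¹) / (Nat.factorial (s+1) : ℝ)) a := by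
        intro s
        exact (hlog.pow (s+1)).div_const _
      have hsum : HasDerivAt (fun a => ∑ s ∈ Finset.range k,
            (Real.log a - Real.log u) ^ (s+1) / (Nat.factorial (s+1) : ℝ))
          (∑ s ∈ Finset.range k,
            ((s+1 : ℕ) * (Real.log a - Real.log u) ^ s * a⁻¹) / (Nat.factorial (s+1) : ℝ)) a :=
        HasDerivAt.fun_sum fun s _ => hterm s
      have := hsum.const_mul u
      refine this.congr_deriv ?_
      unfold Fz
      rw [Real.log_div (ne_of_gt hu0) (ne_of_gt ha0), Finset.mul_sum, Finset.mul_sum]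
      apply Finset.sum_congr rfl
      intro s _
      have hfact : (Nat.factorial (s+1) : ℝ) = (s+1 : ℝ) * (Nat.factorial s : ℝ) := by
        rw [Nat.factorial_succ]; push_cast; ring
      have hs1 : (s+1 : ℝ) ≠ 0 := by positivity
      have hfs : (Nat.factorial s : ℝ) ≠ 0 := Nat.cast_ne_zero.2 (Nat.factorial_ne_zero s)
      rw [hfact]
      have : -(Real.log u - Real.log a) = Real.log a - Real.log u := by ring
      rw [this]
      push_cast
      field_simp
    have hIInt : IntervalIntegrable (fun a => Fz k (u / a)) volume u 1 := by
      apply ContinuousOn.intervalIntegrable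
      rwa [Set.uIcc_of_le hu1]
    have hFTC : ∫ a in Set.Ioc u 1, Fz k (u / a) = G 1 - G u := by
      rw [← intervalIntegral.integral_of_le hu1]
      exact intervalIntegral.integral_eq_sub_of_hasDerivAt hderiv hIInt
    have hGu : G u = 0 := by
      simp [hGdef]
    have hG1 : G 1 = u * ∑ s ∈ Finset.range k,
        (-Real.log u) ^ (s+1) / (Nat.factorial (s+1) : ℝ) := by
      simp only [hGdef, Real.log_one, zero_sub]
    have hG1nn : 0 ≤ G 1 := by
      rw [hG1]
      apply mul_nonneg hu0.le
      apply Finset.sum_nonneg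
      intro s _
      apply div_nonneg _ (Nat.cast_nonneg _)
      exact pow_nonneg (neg_nonneg.2 (Real.log_nonpos hu0.le hu1)) _
    rw [h1, h2, h3, hA, hB, hB2, hFTC, hGu, sub_zero, ← ENNReal.ofReal_add hu0.le hG1nn]
    congr 1
    rw [hG1]
    unfold Fz
    rw [Finset.sum_range_succ']
    simp only [pow_zero, Nat.factorial_zero, Nat.cast_one]
    ring

def Dz (m : ℕ) (τ w : ℝ) : Set (Fin m → ℝ) :=
  {y | (∀ i, y i ∈ Set.Icc (0:ℝ) τ) ∧ ∏ i, y i < w}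

lemma Dz_smul (m : ℕ) {τ : ℝ} (hτ0 : 0 < τ) (w : ℝ) :
    Dz m τ w = τ • Ez m (w / τ ^ m) := by
  have hτm : (0:ℝ) < τ ^ m := pow_pos hτ0 m
  ext x
  rw [Set.mem_smul_set_iff_inv_smul_mem₀ (ne_of_gt hτ0)]
  simp only [Dz, Ez, Cube, Set.mem_setOf_eq, Pi.smul_apply, smul_eq_mul]
  have hprod : ∏ i, τ⁻¹ * x i = (τ⁻¹) ^ m * ∏ i, x i := by
    rw [Finset.prod_mul_distrib, Finset.prod_const, Finset.card_univ, Fintype.card_fin]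
  constructor
  · rintro ⟨hc, hp⟩
    refine ⟨fun i => ⟨mul_nonneg (inv_nonneg.2 hτ0.le) (hc i).1, ?_⟩, ?_⟩
    · rw [inv_mul_le_iff₀ hτ0, mul_one]
      exact (hc i).2
    · rw [hprod, inv_pow, inv_mul_lt_iff₀ hτm, mul_div_cancel₀ _ (ne_of_gt hτm)]
      exact hp
  · rintro ⟨hc, hp⟩
    rw [hprod, inv_pow, inv_mul_lt_iff₀ hτm, mul_div_cancel₀ _ (ne_of_gt hτm)] at hp
    refine ⟨fun i => ⟨?_, ?_⟩, hp⟩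
    · have h1 := (hc i).1
      have e : x i = τ * (τ⁻¹ * x i) := by field_simp
      rw [e]
      exact mul_nonneg hτ0.le h1
    · have h1 := (hc i).2
      have e : x i = τ * (τ⁻¹ * x i) := by field_simp
      rw [e]
      exact mul_le_of_le_one_right hτ0.le h1

lemma Dz_vol (m : ℕ) {τ w : ℝ} (hτ0 : 0 < τ) (hτ1 : τ ≤ 1)
    (hw0 : 0 < w) (hw1 : w ≤ 1) :
    volume (Dz m τ w) = ENNReal.ofReal
      (if w ≤ τ ^ m then
        w * ∑ s ∈ Finset.range m, (m * Real.log τ - Real.log w) ^ s / (Nat.factorial s : ℝ)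
      else τ ^ m) := by
  have hτm : (0:ℝ) < τ ^ m := pow_pos hτ0 m
  rw [Dz_smul m hτ0 w, Measure.addHaar_smul_of_nonneg volume hτ0.le, Module.finrank_fin_fun]
  by_cases h : w ≤ τ ^ m
  · rw [if_pos h]
    have hu0 : 0 < w / τ ^ m := div_pos hw0 hτm
    have hu1 : w / τ ^ m ≤ 1 := (div_le_one hτm).2 h
    rw [Ez_vol m hu0 hu1, ← ENNReal.ofReal_mul (le_of_lt hτm)]
    congr 1
    unfold Fz
    have hlog : -Real.log (w / τ ^ m) = m * Real.log τ - Real.log w := by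
      rw [Real.log_div (ne_of_gt hw0) (ne_of_gt hτm), Real.log_pow]
      push_cast
      ring
    rw [hlog]
    field_simp
  · rw [if_neg h]
    have : 1 < w / τ ^ m := (one_lt_div hτm).2 (lt_of_not_ge h)
    rw [Ez_full m this, cube_vol, mul_one]

/-- Equation (6) of the paper: the exact distribution of Zaykin's truncated
product of `L` i.i.d. Uniform[0,1] P-values (Lebesgue measure on the unit cube),
with truncation threshold `τ`. -/
theorem truncated_product_distribution
    (L : ℕ) (hL : 1 ≤ L) (τ : ℝ) (hτ0 : 0 < τ) (hτ1 : τ ≤ 1)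
    (w : ℝ) (hw0 : 0 < w) (hw1 : w ≤ 1) :
    (volume : Measure (Fin L → ℝ)).restrict (Set.univ.pi fun _ => Set.Icc (0 : ℝ) 1)
        {x : Fin L → ℝ | (∏ k ∈ Finset.univ.filter (fun k => x k ≤ τ), x k) < w} =
      ENNReal.ofReal (∑ k ∈ Finset.Icc 1 L,
        (Nat.choose L k : ℝ) * (1 - τ) ^ (L - k) *
          ((if w ≤ τ ^ k then (1 : ℝ) else 0) * w *
              (∑ s ∈ Finset.range k,
                (k * Real.log τ - Real.log w) ^ s / (Nat.factorial s : ℝ)) +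
            (if τ ^ k < w then (1 : ℝ) else 0) * τ ^ k)) := by
  classical
  -- the decomposition sets
  set C : Finset (Fin L) → Set (Fin L → ℝ) := fun T =>
    {x | (∀ i ∈ T, x i ∈ Set.Icc (0:ℝ) τ) ∧ (∀ i ∉ T, x i ∈ Set.Ioc τ 1) ∧
      ∏ i ∈ T, x i < w} with hCdef
  -- measurability of the event
  have hprodmeas : Measurable
      (fun x : Fin L → ℝ => ∏ k ∈ Finset.univ.filter (fun k => x k ≤ τ), x k) := by
    have he : (fun x : Fin L → ℝ => ∏ k ∈ Finset.univ.filter (fun k => x k ≤ τ), x k)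
        = fun x => ∏ k, (if x k ≤ τ then x k else 1) := by
      funext x
      rw [Finset.prod_filter]
    rw [he]
    exact Finset.measurable_prod _ fun k _ => Measurable.ite
      (measurableSet_le (measurable_pi_apply k) measurable_const)
      (measurable_pi_apply k) measurable_const
  have hEvent : MeasurableSet
      {x : Fin L → ℝ | (∏ k ∈ Finset.univ.filter (fun k => x k ≤ τ), x k) < w} :=
    measurableSet_lt hprodmeas measurable_const
  have hCm : ∀ T : Finset (Fin L), MeasurableSet (C T) := by
    intro T
    have h1 : MeasurableSet {x : Fin L → ℝ | ∀ i ∈ T, x i ∈ Set.Icc (0:ℝ) τ} := by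
      rw [Set.setOf_forall]
      refine MeasurableSet.iInter fun i => ?_
      by_cases hi : i ∈ T
      · simp only [hi, true_implies]
        exact measurable_pi_apply i measurableSet_Icc
      · simp only [hi, false_implies, Set.setOf_true]
        exact MeasurableSet.univ
    have h2 : MeasurableSet {x : Fin L → ℝ | ∀ i ∉ T, x i ∈ Set.Ioc τ 1} := by
      rw [Set.setOf_forall]
      refine MeasurableSet.iInter fun i => ?_
      by_cases hi : i ∈ T
      · simp only [hi, not_true_eq_false, false_implies, Set.setOf_true]
        exact MeasurableSet.univ
      · simp only [hi, not_false_eq_true, true_implies]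
        exact measurable_pi_apply i measurableSet_Ioc
    have h3 : MeasurableSet {x : Fin L → ℝ | ∏ i ∈ T, x i < w} :=
      measurableSet_lt (Finset.measurable_prod _ fun i _ => measurable_pi_apply i)
        measurable_const
    exact (h1.inter (h2.inter h3) : _)
  -- the decomposition
  have hunion :
      {x : Fin L → ℝ | (∏ k ∈ Finset.univ.filter (fun k => x k ≤ τ), x k) < w}
        ∩ (Set.univ.pi fun _ => Set.Icc (0 : ℝ) 1)
      = ⋃ T ∈ (Finset.univ : Finset (Finset (Fin L))), C T := by
    ext x
    simp only [Set.mem_inter_iff, Set.mem_setOf_eq, Set.mem_pi, Set.mem_univ,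
      true_implies, Set.mem_iUnion, Finset.mem_univ, exists_true_left, exists_prop,
      true_and]
    constructor
    · rintro ⟨hev, hcube⟩
      refine ⟨Finset.univ.filter (fun k => x k ≤ τ), ?_, ?_, hev⟩
      · intro i hi
        exact ⟨(hcube i).1, (Finset.mem_filter.1 hi).2⟩
      · intro i hi
        refine ⟨lt_of_not_ge fun h => hi (Finset.mem_filter.2 ⟨Finset.mem_univ i, h⟩),
          (hcube i).2⟩
    · rintro ⟨T, hT1, hT2, hT3⟩
      have hfil : Finset.univ.filter (fun k => x k ≤ τ) = T := by
        ext i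
        simp only [Finset.mem_filter, Finset.mem_univ, true_and]
        constructor
        · intro h
          by_contra hi
          exact absurd h (not_le.2 (hT2 i hi).1)
        · intro h
          exact (hT1 i h).2
      refine ⟨by rw [hfil]; exact hT3, fun i => ?_⟩
      by_cases hi : i ∈ T
      · exact ⟨(hT1 i hi).1, le_trans (hT1 i hi).2 hτ1⟩
      · exact ⟨le_trans hτ0.le (hT2 i hi).1.le, (hT2 i hi).2⟩
  -- disjointness
  have hdisj : Set.Pairwise (↑(Finset.univ : Finset (Finset (Fin L))) : Set (Finset (Fin L))) (Function.onFun Disjoint C) := by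
    intro T _ T' _ hne
    rw [Function.onFun, Set.disjoint_left]
    intro x hx hx'
    apply hne
    ext i
    constructor
    · intro hi
      by_contra hi'
      exact absurd (hx.1 i hi).2 (not_le.2 (hx'.2.1 i hi').1)
    · intro hi
      by_contra hi'
      exact absurd (hx'.1 i hi).2 (not_le.2 (hx.2.1 i hi').1)
  -- measure of each piece
  have hpiece : ∀ T : Finset (Fin L),
      volume (C T) = ENNReal.ofReal ((1 - τ) ^ (L - T.card)) * volume (Dz T.card τ w) := by
    intro T
    set B1 : Set ({i : Fin L // i ∈ T} → ℝ) :=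
      {y | (∀ j, y j ∈ Set.Icc (0:ℝ) τ) ∧ ∏ j, y j < w} with hB1
    set B2 : Set ({i : Fin L // ¬ i ∈ T} → ℝ) :=
      Set.univ.pi fun _ => Set.Ioc τ 1 with hB2
    have hB1m : MeasurableSet B1 := by
      have e : B1 = {y | ∀ j, y j ∈ Set.Icc (0:ℝ) τ} ∩ {y | ∏ j, y j < w} := rfl
      rw [e]
      apply MeasurableSet.inter
      · rw [Set.setOf_forall]
        exact MeasurableSet.iInter fun j => measurable_pi_apply j measurableSet_Icc
      · exact measurableSet_lt
          (Finset.measurable_prod _ fun j _ => measurable_pi_apply j) measurable_const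
    have hB2m : MeasurableSet B2 :=
      MeasurableSet.univ_pi fun j => measurableSet_Ioc
    have hmp := MeasureTheory.volume_preserving_piEquivPiSubtypeProd
      (fun _ : Fin L => ℝ) (· ∈ T)
    have hpre : (MeasurableEquiv.piEquivPiSubtypeProd (fun _ : Fin L => ℝ) (· ∈ T))
        ⁻¹' (B1 ×ˢ B2) = C T := by
      ext x
      simp only [MeasurableEquiv.piEquivPiSubtypeProd, MeasurableEquiv.coe_mk,
        Equiv.piEquivPiSubtypeProd, Equiv.coe_fn_mk, Set.mem_preimage, Set.mem_prod,
        hB1, hB2, Set.mem_setOf_eq, Set.mem_pi, Set.mem_univ, true_implies,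
        Subtype.forall, hCdef, Finset.prod_coe_sort]
      tauto
    have h1 : volume (C T) = volume B1 * volume B2 := by
      rw [← hpre, hmp.measure_preimage (hB1m.prod hB2m).nullMeasurableSet,
        Measure.volume_eq_prod, Measure.prod_prod]
      congr!
    have h2 : volume B2 = ENNReal.ofReal ((1 - τ) ^ (L - T.card)) := by
      rw [hB2, volume_pi_pi]
      simp only [Real.volume_Ioc]
      rw [Finset.prod_const, Finset.card_univ, ENNReal.ofReal_pow (by linarith : (0:ℝ) ≤ 1 - τ)]
      congr 2
      rw [Fintype.card_subtype_compl, Fintype.card_fin, Fintype.card_coe]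
    have h3 : volume B1 = volume (Dz T.card τ w) := by
      have f : Fin T.card ≃ {i : Fin L // i ∈ T} := T.equivFin.symm
      have hmp2 := MeasureTheory.volume_measurePreserving_piCongrLeft
        (fun _ : {i : Fin L // i ∈ T} => ℝ) f
      have hpre2 : (MeasurableEquiv.piCongrLeft (fun _ : {i : Fin L // i ∈ T} => ℝ) f)
          ⁻¹' B1 = Dz T.card τ w := by
        ext y
        set z := (MeasurableEquiv.piCongrLeft (fun _ : {i : Fin L // i ∈ T} => ℝ) f) y
          with hz
        have hy : ∀ j, z (f j) = y j := by
          intro j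
          rw [hz, MeasurableEquiv.coe_piCongrLeft]
          exact Equiv.piCongrLeft_apply_apply (fun _ => ℝ) f y j
        have hall : (∀ j', z j' ∈ Set.Icc (0:ℝ) τ) ↔ ∀ j, y j ∈ Set.Icc (0:ℝ) τ := by
          rw [← f.forall_congr_right]
          exact forall_congr' fun j => by rw [hy j]
        have hprod : ∏ j', z j' = ∏ j, y j := by
          rw [← f.prod_comp]
          exact Finset.prod_congr rfl fun j _ => hy j
        simp only [Set.mem_preimage, hB1, Set.mem_setOf_eq, ← hz, Dz, hall, hprod]
      rw [← hpre2, hmp2.measure_preimage hB1m.nullMeasurableSet]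
    rw [h1, h2, h3, mul_comm]
  -- putting it together
  rw [Measure.restrict_apply hEvent, hunion, measure_biUnion_finset hdisj fun T _ => hCm T]
  have hDz : ∀ m : ℕ, volume (Dz m τ w) = ENNReal.ofReal
      (if w ≤ τ ^ m then
        w * ∑ s ∈ Finset.range m, (m * Real.log τ - Real.log w) ^ s / (Nat.factorial s : ℝ)
      else τ ^ m) := fun m => Dz_vol m hτ0 hτ1 hw0 hw1
  have hτ' : (0:ℝ) ≤ 1 - τ := by linarith
  have hsum_nn : ∀ m : ℕ, 0 ≤ (if w ≤ τ ^ m then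
      w * ∑ s ∈ Finset.range m, (m * Real.log τ - Real.log w) ^ s / (Nat.factorial s : ℝ)
      else τ ^ m) := by
    intro m
    split_ifs with h
    · apply mul_nonneg hw0.le
      apply Finset.sum_nonneg
      intro s _
      apply div_nonneg _ (Nat.cast_nonneg _)
      apply pow_nonneg
      have : Real.log w ≤ Real.log (τ ^ m) := Real.log_le_log hw0 h
      rw [Real.log_pow] at this
      linarith
    · positivity
  set g : ℕ → ℝ≥0∞ := fun m => ENNReal.ofReal ((1 - τ) ^ (L - m) *
    (if w ≤ τ ^ m then
      w * ∑ s ∈ Finset.range m, (m * Real.log τ - Real.log w) ^ s / (Nat.factorial s : ℝ)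
    else τ ^ m)) with hg
  have hterm : ∀ T : Finset (Fin L), volume (C T) = g T.card := by
    intro T
    rw [hpiece T, hDz T.card, ← ENNReal.ofReal_mul (pow_nonneg hτ' _)]
  have step1 : ∑ T ∈ (Finset.univ : Finset (Finset (Fin L))), volume (C T)
      = ∑ m ∈ Finset.range (L + 1), L.choose m • g m := by
    rw [Finset.sum_congr rfl (fun T _ => hterm T), ← Finset.powerset_univ,
      Finset.sum_powerset_apply_card g, Finset.card_univ, Fintype.card_fin]
  have hg0 : g 0 = 0 := by
    simp [hg, hw1]
  have step2 : ∑ m ∈ Finset.range (L + 1), L.choose m • g m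
      = ∑ m ∈ Finset.Icc 1 L, L.choose m • g m := by
    refine (Finset.sum_subset ?_ ?_).symm
    · intro m hm
      rw [Finset.mem_Icc] at hm
      rw [Finset.mem_range]
      omega
    · intro m hm hm'
      rw [Finset.mem_range] at hm
      rw [Finset.mem_Icc] at hm'
      have hm0 : m = 0 := by omega
      rw [hm0, hg0, smul_zero]
  rw [step1, step2, ENNReal.ofReal_sum_of_nonneg]
  · apply Finset.sum_congr rfl
    intro m _
    rw [hg, nsmul_eq_mul, ← ENNReal.ofReal_natCast (L.choose m),
      ← ENNReal.ofReal_mul (Nat.cast_nonneg _)]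
    congr 1
    rcases le_or_gt w (τ ^ m) with h | h
    · rw [if_pos h, if_pos h, if_neg (not_lt.2 h)]
      ring
    · rw [if_neg (not_le.2 h), if_neg (not_le.2 h), if_pos h]
      ring
  · intro m _
    apply mul_nonneg (mul_nonneg (Nat.cast_nonneg _) (pow_nonneg hτ' _))
    rcases le_or_gt w (τ ^ m) with h | h
    · rw [if_pos h, if_neg (not_lt.2 h)]
      have hnn := hsum_nn m
      rw [if_pos h] at hnn
      apply add_nonneg
      · rw [one_mul]
        exact hnn
      · simp
    · rw [if_neg (not_le.2 h), if_pos h]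
      apply add_nonneg
      · simp
      · rw [one_mul]
        positivity
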